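/- Let n ≥ 1 and let ψ : [0,1]^n → ℝ be continuous and monotonic with ψ(c·1) = c for all c ∈ [0,1], where 1 = (1,…,1). Suppose that for all u, v ∈ [0,1]^n, all c ∈ [0,1], and all α ∈ (0,1): ψ(u) ≥ ψ(v) if and only if ψ(αu + (1−α)c·1) ≥ ψ(αv + (1−α)c·1). Then ψ is homogeneous and translation-invariant. -/

import Mathlib

open Filter Set Topology

/-- Analytic core of the paper's Lemma 4: a continuous, monotonic function on
the unit cube with `ψ(c·1) = c`, whose ranking is invariant under mixing with
constant vectors, is homogeneous and translation-invariant. -/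
theorem stmt_4 {n : ℕ} (hn : 1 ≤ n) (ψ : (Fin n → ℝ) → ℝ)
    (hcont : ContinuousOn ψ (Set.Icc (0 : Fin n → ℝ) 1))
    (hmono : ∀ u v : Fin n → ℝ, u ∈ Set.Icc (0 : Fin n → ℝ) 1 →
      v ∈ Set.Icc (0 : Fin n → ℝ) 1 → (∀ i, v i < u i) → ψ v < ψ u)
    (hdiag : ∀ c : ℝ, c ∈ Set.Icc (0 : ℝ) 1 → ψ (fun _ => c) = c)
    (hmix : ∀ u v : Fin n → ℝ, u ∈ Set.Icc (0 : Fin n → ℝ) 1 →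
      v ∈ Set.Icc (0 : Fin n → ℝ) 1 → ∀ c ∈ Set.Icc (0 : ℝ) 1,
      ∀ α ∈ Set.Ioo (0 : ℝ) 1,
      (ψ v ≤ ψ u ↔
        ψ (α • v + (1 - α) • (fun _ => c : Fin n → ℝ)) ≤
          ψ (α • u + (1 - α) • (fun _ => c : Fin n → ℝ)))) :
    (∀ u : Fin n → ℝ, u ∈ Set.Icc (0 : Fin n → ℝ) 1 → ∀ α : ℝ, 0 < α →
      α • u ∈ Set.Icc (0 : Fin n → ℝ) 1 → ψ (α • u) = α * ψ u) ∧
    (∀ u : Fin n → ℝ, u ∈ Set.Icc (0 : Fin n → ℝ) 1 → ∀ c : ℝ,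
      (u + fun _ => c) ∈ Set.Icc (0 : Fin n → ℝ) 1 →
      ψ (u + fun _ => c) = ψ u + c) := by
  have hconst : ∀ c : ℝ, c ∈ Set.Icc (0:ℝ) 1 →
      (fun _ => c : Fin n → ℝ) ∈ Set.Icc (0 : Fin n → ℝ) 1 :=
    fun c hc => ⟨fun i => hc.1, fun i => hc.2⟩
  have hmixmem : ∀ u v : Fin n → ℝ, u ∈ Set.Icc (0 : Fin n → ℝ) 1 →
      v ∈ Set.Icc (0 : Fin n → ℝ) 1 → ∀ α ∈ Set.Icc (0:ℝ) 1,
      α • u + (1 - α) • v ∈ Set.Icc (0 : Fin n → ℝ) 1 := by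
    intro u v hu hv α hα
    have hu0 : ∀ i, (0:ℝ) ≤ u i := fun i => hu.1 i
    have hu1 : ∀ i, u i ≤ 1 := fun i => hu.2 i
    have hv0 : ∀ i, (0:ℝ) ≤ v i := fun i => hv.1 i
    have hv1 : ∀ i, v i ≤ 1 := fun i => hv.2 i
    constructor <;> intro i
    · show (0:ℝ) ≤ α * u i + (1 - α) * v i
      nlinarith [hu0 i, hv0 i, hα.1, hα.2]
    · show α * u i + (1 - α) * v i ≤ 1
      nlinarith [hu1 i, hv1 i, hu0 i, hv0 i, hα.1, hα.2]
  -- limit of mixtures as α → 1⁻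
  have hpath : ∀ u v : Fin n → ℝ, u ∈ Set.Icc (0 : Fin n → ℝ) 1 →
      v ∈ Set.Icc (0 : Fin n → ℝ) 1 →
      Tendsto (fun α : ℝ => ψ (α • u + (1 - α) • v)) (𝓝[<] (1:ℝ)) (𝓝 (ψ u)) := by
    intro u v hu hv
    have hc : Continuous (fun α : ℝ => α • u + (1 - α) • v) := by fun_prop
    have h1 : Tendsto (fun α : ℝ => α • u + (1 - α) • v) (𝓝[<] (1:ℝ)) (𝓝 u) := by
      have := (hc.tendsto 1).mono_left (nhdsWithin_le_nhds (s := Set.Iio (1:ℝ)))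
      simpa using this
    have hmem : ∀ᶠ α in 𝓝[<] (1:ℝ), α • u + (1 - α) • v ∈ Set.Icc (0 : Fin n → ℝ) 1 := by
      filter_upwards [Ioo_mem_nhdsLT_of_mem (show (1:ℝ) ∈ Set.Ioc (0:ℝ) 1 by norm_num)]
        with α hα
      exact hmixmem u v hu hv α ⟨hα.1.le, hα.2.le⟩
    exact (hcont u hu).tendsto.comp (tendsto_nhdsWithin_iff.mpr ⟨h1, hmem⟩)
  have hone : ψ (fun _ => (1:ℝ)) = 1 := hdiag 1 (by norm_num)
  have hzero : ψ (fun _ => (0:ℝ)) = 0 := hdiag 0 (by norm_num)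
  have hone' : ((fun _ => (1:ℝ)) : Fin n → ℝ) = (1 : Fin n → ℝ) := rfl
  have hrange : ∀ u ∈ Set.Icc (0 : Fin n → ℝ) 1, ψ u ∈ Set.Icc (0:ℝ) 1 := by
    intro u hu
    constructor
    · -- lower bound via path with v = 1
      refine ge_of_tendsto (hpath u (fun _ => 1) hu (hconst 1 (by norm_num))) ?_
      filter_upwards [Ioo_mem_nhdsLT_of_mem (show (1:ℝ) ∈ Set.Ioc (0:ℝ) 1 by norm_num)]
        with α hα
      have hw : α • u + (1 - α) • (fun _ => (1:ℝ)) ∈ Set.Icc (0 : Fin n → ℝ) 1 :=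
        hmixmem u _ hu (hconst 1 (by norm_num)) α ⟨hα.1.le, hα.2.le⟩
      have := hmono (α • u + (1 - α) • (fun _ => (1:ℝ))) (fun _ => 0) hw
        (hconst 0 (by norm_num)) (by
          intro i
          show (0:ℝ) < α * u i + (1 - α) * 1
          have h0 : (0:ℝ) ≤ u i := hu.1 i
          nlinarith [hα.1, hα.2])
      rw [hzero] at this
      exact this.le
    · refine le_of_tendsto (hpath u (fun _ => 0) hu (hconst 0 (by norm_num))) ?_
      filter_upwards [Ioo_mem_nhdsLT_of_mem (show (1:ℝ) ∈ Set.Ioc (0:ℝ) 1 by norm_num)]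
        with α hα
      have hw : α • u + (1 - α) • (fun _ => (0:ℝ)) ∈ Set.Icc (0 : Fin n → ℝ) 1 :=
        hmixmem u _ hu (hconst 0 (by norm_num)) α ⟨hα.1.le, hα.2.le⟩
      have := hmono (fun _ => 1) (α • u + (1 - α) • (fun _ => (0:ℝ)))
        (hconst 1 (by norm_num)) hw (by
          intro i
          show α * u i + (1 - α) * 0 < 1
          have h1 : u i ≤ 1 := hu.2 i
          have h0 : (0:ℝ) ≤ u i := hu.1 i
          nlinarith [hα.1, hα.2])
      rw [hone] at this
      exact this.le
  -- key lemma
  have keyB : ∀ u ∈ Set.Icc (0 : Fin n → ℝ) 1, ∀ c ∈ Set.Icc (0:ℝ) 1,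
      ∀ α ∈ Set.Ioo (0:ℝ) 1,
      ψ (α • u + (1 - α) • (fun _ => c : Fin n → ℝ)) = α * ψ u + (1 - α) * c := by
    intro u hu c hc α hα
    set t := ψ u with ht
    have htmem : t ∈ Set.Icc (0:ℝ) 1 := hrange u hu
    have htconst : ψ (fun _ => t) = t := hdiag t htmem
    have htv : (fun _ => t : Fin n → ℝ) ∈ Set.Icc (0 : Fin n → ℝ) 1 := hconst t htmem
    have hcomb : (α • (fun _ => t) + (1 - α) • (fun _ => c) : Fin n → ℝ)
        = (fun _ => α * t + (1 - α) * c) := by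
      funext i; simp [smul_eq_mul]
    have hcombmem : α * t + (1 - α) * c ∈ Set.Icc (0:ℝ) 1 := by
      constructor
      · nlinarith [htmem.1, htmem.2, hc.1, hc.2, hα.1, hα.2]
      · nlinarith [htmem.1, htmem.2, hc.1, hc.2, hα.1, hα.2]
    have hval : ψ (α • (fun _ => t) + (1 - α) • (fun _ => c) : Fin n → ℝ)
        = α * t + (1 - α) * c := by
      rw [hcomb]; exact hdiag _ hcombmem
    have h1 := (hmix u (fun _ => t) hu htv c hc α hα).mp (le_of_eq htconst)
    have h2 := (hmix (fun _ => t) u htv hu c hc α hα).mp (le_of_eq htconst.symm)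
    rw [hval] at h1 h2
    linarith
  constructor
  · -- homogeneity
    intro u hu α hα hαu
    rcases lt_trichotomy α 1 with h1 | h1 | h1
    · have hk := keyB u hu 0 (by norm_num) α ⟨hα, h1⟩
      have he0 : α • u + (1 - α) • (fun _ => (0:ℝ)) = α • u := by
        funext i
        show α * u i + (1 - α) * 0 = α * u i
        ring
      rw [he0] at hk
      rw [hk]; ring
    · simp [h1]
    · have hinv : (1/α) ∈ Set.Ioo (0:ℝ) 1 := by
        constructor
        · positivity
        · rw [div_lt_one (by linarith)]; linarith
      have := keyB (α • u) hαu 0 (by norm_num) (1/α) hinv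
      have heq : ((1/α) • (α • u) + (1 - 1/α) • (fun _ => (0:ℝ)) : Fin n → ℝ) = u := by
        funext i
        show (1/α) * (α * u i) + (1 - 1/α) * 0 = u i
        field_simp
        ring
      rw [heq] at this
      have : ψ u = (1/α) * ψ (α • u) := by linarith
      field_simp at this
      linarith
  · -- translation invariance
    intro u hu c hc
    have i0 : Fin n := ⟨0, hn⟩
    have hc1 : c ≤ 1 := by
      have h1 : u i0 + c ≤ 1 := hc.2 i0
      have h2 : (0:ℝ) ≤ u i0 := hu.1 i0
      linarith
    have hcm1 : -1 ≤ c := by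
      have h1 : (0:ℝ) ≤ u i0 + c := hc.1 i0
      have h2 : u i0 ≤ 1 := hu.2 i0
      linarith
    obtain ⟨d, hdmem, hcd⟩ :
        ∃ d : ℝ, d ∈ Set.Icc (0:ℝ) 1 ∧ c + d ∈ Set.Icc (0:ℝ) 1 := by
      rcases le_or_gt 0 c with h | h
      · exact ⟨0, ⟨le_rfl, by norm_num⟩, ⟨by linarith, by linarith⟩⟩
      · exact ⟨-c, ⟨by linarith, by linarith⟩, ⟨by linarith, by linarith⟩⟩
    have hhalf : (1/2 : ℝ) ∈ Set.Ioo (0:ℝ) 1 := by norm_num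
    have k1 := keyB (u + fun _ => c) hc d hdmem (1/2) hhalf
    have k2 := keyB u hu (c + d) hcd (1/2) hhalf
    have heq : ((1/2:ℝ) • (u + fun _ => c) + ((1:ℝ) - 1/2) • (fun _ => d) : Fin n → ℝ)
        = (1/2:ℝ) • u + ((1:ℝ) - 1/2) • (fun _ => c + d) := by
      funext i
      simp only [Pi.add_apply, Pi.smul_apply, smul_eq_mul]
      ring
    rw [heq] at k1
    rw [k2] at k1
    linarith
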